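/- Suppose α is an allowed elementary (n+1)-path, γ an allowed elementary n-path, and β an allowed elementary (n−1)-path in a digraph G, with β < γ < α (each obtained from the next by deleting one vertex so that the result is still allowed), and suppose α, γ, β all have the same starting vertex and the same ending vertex. Then either (a) there exists an allowed elementary n-path γ' ≠ γ with β < γ' < α, or (b) β is obtained from α = v_0 v_1 ⋯ v_{n+1} by removing two consecutive vertices v_i and v_{i+1} for some 1 ≤ i ≤ n−1. -/

import Mathlib

/-- A digraph: a vertex set together with an irreflexive edge relation supported on the
vertex set (edges are ordered pairs off the diagonal). -/
structure DiGraph (V : Type) where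
  verts : Set V
  Edge : V → V → Prop
  edge_mem_left : ∀ u v, Edge u v → u ∈ verts
  edge_mem_right : ∀ u v, Edge u v → v ∈ verts
  edge_ne : ∀ u v, Edge u v → u ≠ v

variable {V : Type}

/-- An allowed elementary path: a nonempty list of vertices of `G` such that each
consecutive pair is a directed edge of `G`. -/
def IsAllowed (G : DiGraph V) (p : List V) : Prop :=
  p ≠ [] ∧ (∀ v ∈ p, v ∈ G.verts) ∧ p.Chain' G.Edge

/-- `Del p q` : `p` is obtained from `q` by deleting one vertex. -/
def Del (p q : List V) : Prop := ∃ i < q.length, p = q.eraseIdx i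

/-- Value of a function on vertices extended to a path: the sum over its vertices. -/
def fval (f : V → ℝ) (p : List V) : ℝ := (p.map f).sum

/-- A discrete Morse function on a digraph `G`: a nonnegative function on vertices such
that for every allowed elementary path `p` there is (i) at most one allowed elementary
path obtained from `p` by deleting one vertex with the same `f`-value, and (ii) at most
one allowed elementary path obtained from `p` by inserting one vertex with the same
`f`-value. -/
def IsMorse (G : DiGraph V) (f : V → ℝ) : Prop :=
  (∀ v, 0 ≤ f v) ∧
  ∀ p, IsAllowed G p →
    ((∀ β β', IsAllowed G β → Del β p → fval f β = fval f p →
        IsAllowed G β' → Del β' p → fval f β' = fval f p → β = β') ∧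
     (∀ α α', IsAllowed G α → Del p α → fval f α = fval f p →
        IsAllowed G α' → Del p α' → fval f α' = fval f p → α = α'))

/-- An allowed elementary path is critical if no allowed path obtained by deleting one
vertex has the same `f`-value, and no allowed path obtained by inserting one vertex has
the same `f`-value. -/
def IsCritical (G : DiGraph V) (f : V → ℝ) (p : List V) : Prop :=
  (¬ ∃ β, IsAllowed G β ∧ Del β p ∧ fval f β = fval f p) ∧
  (¬ ∃ α, IsAllowed G α ∧ Del p α ∧ fval f α = fval f p)

/-- A directed loop: an allowed elementary path `v₀ v₁ ⋯ vₙ v₀` with `n ≥ 1`. -/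
def IsLoop (G : DiGraph V) (p : List V) : Prop :=
  IsAllowed G p ∧ 3 ≤ p.length ∧ p.head? = p.getLast?

/-- A simplicial allowed elementary path: all vertices distinct. -/
def Simplicial (G : DiGraph V) (p : List V) : Prop := IsAllowed G p ∧ p.Nodup

/-- A pair of the combinatorial discrete gradient vector field `M(G,f)`:
`β` is obtained from `α` by inserting one vertex, and `f(α) = f(β)`. -/
def MPair (G : DiGraph V) (f : V → ℝ) (α β : List V) : Prop :=
  IsAllowed G α ∧ IsAllowed G β ∧ Del α β ∧ fval f α = fval f β

/-- `H` is a sub-digraph of `G`. -/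
def Subdigraph (H G : DiGraph V) : Prop :=
  H.verts ⊆ G.verts ∧ ∀ u v, H.Edge u v → G.Edge u v


namespace StmtAux

variable {V : Type}

lemma some_eq₂ {α : Type*} {l₁ l₂ : List α} {s t : ℕ} (hs : s < l₁.length) (ht : t < l₂.length)
    (h : l₁[s]? = l₂[t]?) : l₁[s] = l₂[t] := by
  rw [List.getElem?_eq_getElem hs, List.getElem?_eq_getElem ht] at h
  exact Option.some.inj h

lemma chain'_edge {α : Type*} {R : α → α → Prop} {l : List α} (h : l.Chain' R) {t : ℕ}
    (ht : t + 1 < l.length) : R l[t] l[t + 1] :=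
  List.isChain_iff_getElem.1 h t (by omega)

lemma eraseIdx_comm' {α : Type*} (q : List α) {k l : ℕ} (hkl : k ≤ l) :
    (q.eraseIdx (l + 1)).eraseIdx k = (q.eraseIdx k).eraseIdx l := by
  apply List.ext_getElem?
  intro t
  simp only [List.getElem?_eraseIdx]
  split_ifs <;> first | rfl | omega

lemma getElem?_double {α : Type*} (a : List α) (k l t : ℕ) (hkl : k < l) :
    ((a.eraseIdx k).eraseIdx (l - 1))[t]? =
      if t < k then a[t]? else if t < l - 1 then a[t + 1]? else a[t + 2]? := by
  simp only [List.getElem?_eraseIdx]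
  split_ifs <;> first | rfl | omega

lemma chain'_eraseIdx {α : Type*} {R : α → α → Prop} {q : List α} {m : ℕ} (hc : q.Chain' R)
    (hm1 : 1 ≤ m) (hm2 : m + 1 < q.length)
    (he : R (q[m - 1]'(by omega)) (q[m + 1]'hm2)) : (q.eraseIdx m).Chain' R := by
  refine List.isChain_iff_getElem.2 ?_
  have hlen : (q.eraseIdx m).length = q.length - 1 := by
    rw [List.length_eraseIdx, if_pos (by omega)]
  intro t ht
  rw [hlen] at ht
  simp only [List.get_eq_getElem, List.getElem_eraseIdx]
  by_cases h2 : t + 1 < m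
  · rw [dif_pos (by omega), dif_pos h2]
    exact chain'_edge hc (by omega)
  · by_cases h1 : t < m
    · rw [dif_pos h1, dif_neg h2]
      obtain rfl : m = t + 1 := by omega
      simpa using he
    · rw [dif_neg h1, dif_neg (by omega)]
      exact chain'_edge hc (by omega)

lemma key (G : DiGraph V) {a b : List V} {k l : ℕ}
    (ha : IsAllowed G a) (hb : IsAllowed G b)
    (hk : 1 ≤ k) (hkl : k + 2 ≤ l) (hl : l + 1 < a.length)
    (hbdef : b = (a.eraseIdx k).eraseIdx (l - 1)) :
    IsAllowed G (a.eraseIdx k) ∧ IsAllowed G (a.eraseIdx l) ∧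
    a.eraseIdx k ≠ a.eraseIdx l ∧ Del b (a.eraseIdx k) ∧ Del b (a.eraseIdx l) := by
  have hka : k < a.length := by omega
  have hla : l < a.length := by omega
  have hlk : (a.eraseIdx k).length = a.length - 1 := by
    rw [List.length_eraseIdx, if_pos hka]
  have hll : (a.eraseIdx l).length = a.length - 1 := by
    rw [List.length_eraseIdx, if_pos hla]
  have hblen : b.length = a.length - 2 := by
    rw [hbdef, List.length_eraseIdx, hlk, if_pos (by omega)]
    omega
  -- edge a[k-1] -> a[k+1]
  have e1 : b[k - 1]? = a[k - 1]? := by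
    rw [hbdef, getElem?_double a k l (k - 1) (by omega), if_pos (by omega)]
  have e2 : b[k - 1 + 1]? = a[k + 1]? := by
    rw [show k - 1 + 1 = k from by omega, hbdef, getElem?_double a k l k (by omega),
      if_neg (by omega), if_pos (by omega)]
  have hE1 := chain'_edge hb.2.2 (t := k - 1) (by omega)
  have v1 : b[k - 1] = a[k - 1] := some_eq₂ (by omega) (by omega) e1
  have v2 : b[k - 1 + 1] = a[k + 1] := some_eq₂ (by omega) (by omega) e2
  rw [v1, v2] at hE1
  -- edge a[l-1] -> a[l+1]
  have e3 : b[l - 2]? = a[l - 1]? := by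
    rw [hbdef, getElem?_double a k l (l - 2) (by omega), if_neg (by omega), if_pos (by omega),
      show l - 2 + 1 = l - 1 from by omega]
  have e4 : b[l - 2 + 1]? = a[l + 1]? := by
    rw [show l - 2 + 1 = l - 1 from by omega, hbdef, getElem?_double a k l (l - 1) (by omega),
      if_neg (by omega), if_neg (by omega), show l - 1 + 2 = l + 1 from by omega]
  have hE2 := chain'_edge hb.2.2 (t := l - 2) (by omega)
  have v3 : b[l - 2] = a[l - 1] := some_eq₂ (by omega) (by omega) e3
  have v4 : b[l - 2 + 1] = a[l + 1] := some_eq₂ (by omega) (by omega) e4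
  rw [v3, v4] at hE2
  refine ⟨⟨?_, ?_, ?_⟩, ⟨?_, ?_, ?_⟩, ?_, ?_, ?_⟩
  · exact List.length_pos_iff.1 (by omega)
  · exact fun v hv => ha.2.1 v (List.mem_of_mem_eraseIdx hv)
  · exact chain'_eraseIdx ha.2.2 hk (by omega) hE1
  · exact List.length_pos_iff.1 (by omega)
  · exact fun v hv => ha.2.1 v (List.mem_of_mem_eraseIdx hv)
  · exact chain'_eraseIdx ha.2.2 (by omega) (by omega) hE2
  · intro hEq
    have hne : (a.eraseIdx k)[k]? ≠ (a.eraseIdx l)[k]? := by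
      rw [List.getElem?_eraseIdx, List.getElem?_eraseIdx, if_neg (lt_irrefl k), if_pos (by omega)]
      intro hEq'
      exact G.edge_ne _ _ (chain'_edge ha.2.2 (t := k) (by omega))
        (some_eq₂ (by omega) (by omega) hEq'.symm)
    exact hne (by rw [hEq])
  · exact ⟨l - 1, by omega, hbdef⟩
  · refine ⟨k, by omega, ?_⟩
    rw [hbdef, ← eraseIdx_comm' a (show k ≤ l - 1 from by omega),
      show l - 1 + 1 = l from by omega]

end StmtAux

open StmtAux in
/-- If `α > γ > β` are allowed elementary paths (each obtained from the
next by deleting one vertex), of dimensions `n+1`, `n`, `n−1`, all with the same starting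
vertex and the same ending vertex, then either there is an allowed elementary `n`-path
`γ' ≠ γ` with `β < γ' < α`, or `β` is obtained from `α = v₀⋯v_{n+1}` by removing two
consecutive vertices `vᵢ, v_{i+1}` with `1 ≤ i ≤ n−1`. -/
theorem exists_other_middle_or_consecutive_same_ends (G : DiGraph V) (n : ℕ) (hn : 1 ≤ n)
    (a g b : List V)
    (ha : IsAllowed G a) (hg : IsAllowed G g) (hb : IsAllowed G b)
    (hlen : a.length = n + 2)
    (hga : Del g a) (hbg : Del b g)
    (hhead₁ : a.head? = g.head?) (hhead₂ : g.head? = b.head?)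
    (hlast₁ : a.getLast? = g.getLast?) (hlast₂ : g.getLast? = b.getLast?) :
    (∃ g', IsAllowed G g' ∧ g' ≠ g ∧ Del g' a ∧ Del b g') ∨
    (∃ i, 1 ≤ i ∧ i ≤ n - 1 ∧ b = (a.eraseIdx i).eraseIdx i) := by
  obtain ⟨i, hia, hgdef⟩ := hga
  obtain ⟨j, hjg, hbdef⟩ := hbg
  have hglen : g.length = n + 1 := by
    rw [hgdef, List.length_eraseIdx, if_pos hia, hlen]
    omega
  rw [hglen] at hjg
  rw [hlen] at hia
  have hblen : b.length = n := by
    rw [hbdef, List.length_eraseIdx, hglen, if_pos (by omega)]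
    omega
  have hane : ∀ t (ht : t + 1 < a.length), a[t]'(by omega) ≠ a[t + 1]'ht := fun t ht =>
    G.edge_ne _ _ (chain'_edge ha.2.2 ht)
  have hgne : ∀ t (ht : t + 1 < g.length), g[t]'(by omega) ≠ g[t + 1]'ht := fun t ht =>
    G.edge_ne _ _ (chain'_edge hg.2.2 ht)
  have hi1 : 1 ≤ i := by
    by_contra hc
    have hi0 : i = 0 := by omega
    have h0 : a[0]? = a[0 + 1]? := by
      have h := hhead₁
      rw [List.head?_eq_getElem?, List.head?_eq_getElem?, hgdef, hi0,
        List.getElem?_eraseIdx, if_neg (by omega)] at h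
      exact h
    exact hane 0 (by omega) (some_eq₂ (by omega) (by omega) h0)
  have hi2 : i ≤ n := by
    by_contra hc
    have hi0 : i = n + 1 := by omega
    have h0 : a[n + 1]? = a[n]? := by
      have h := hlast₁
      rw [List.getLast?_eq_getElem?, List.getLast?_eq_getElem?, hlen, hglen, hgdef, hi0,
        show n + 2 - 1 = n + 1 from by omega, show n + 1 - 1 = n from by omega,
        List.getElem?_eraseIdx, if_pos (by omega)] at h
      exact h
    exact hane n (by omega) (some_eq₂ (by omega) (by omega) h0).symm
  have hj1 : 1 ≤ j := by
    by_contra hc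
    have hj0 : j = 0 := by omega
    have h0 : g[0]? = g[0 + 1]? := by
      have h := hhead₂
      rw [List.head?_eq_getElem?, List.head?_eq_getElem?, hbdef, hj0,
        List.getElem?_eraseIdx, if_neg (by omega)] at h
      exact h
    exact hgne 0 (by omega) (some_eq₂ (by omega) (by omega) h0)
  have hj2 : j ≤ n - 1 := by
    by_contra hc
    have hj0 : j = n := by omega
    have h0 : g[n]? = g[n - 1]? := by
      have h := hlast₂
      rw [List.getLast?_eq_getElem?, List.getLast?_eq_getElem?, hglen, hblen, hbdef, hj0,
        show n + 1 - 1 = n from by omega, List.getElem?_eraseIdx, if_pos (by omega)] at h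
      exact h
    exact hgne (n - 1) (by omega)
      (by simpa [show n - 1 + 1 = n from by omega] using
        (some_eq₂ (show n < g.length from by omega) (show n - 1 < g.length from by omega) h0).symm)
  rcases lt_trichotomy j i with hji | hji | hji
  · -- j < i
    by_cases hadj : j + 1 = i
    · -- consecutive removal: indices j, j+1 in a
      right
      refine ⟨j, hj1, hj2, ?_⟩
      rw [hbdef, hgdef, ← hadj, eraseIdx_comm' a (le_refl j)]
    · -- k = j, l = i, gap ≥ 2
      have hb2 : b = (a.eraseIdx j).eraseIdx (i - 1) := by
        rw [hbdef, hgdef, ← eraseIdx_comm' a (show j ≤ i - 1 from by omega),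
          show i - 1 + 1 = i from by omega]
      obtain ⟨hA1, hA2, hNe, hD1, hD2⟩ := key G ha hb hj1 (show j + 2 ≤ i from by omega)
        (show i + 1 < a.length from by omega) hb2
      left
      exact ⟨a.eraseIdx j, hA1, by rw [hgdef]; exact hNe, ⟨j, by omega, rfl⟩, hD1⟩
  · -- j = i : consecutive
    right
    refine ⟨i, hi1, by omega, ?_⟩
    rw [hbdef, hgdef, hji]
  · -- i < j : k = i, l = j + 1
    have hb2 : b = (a.eraseIdx i).eraseIdx (j + 1 - 1) := by
      rw [hbdef, hgdef, Nat.add_sub_cancel]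
    obtain ⟨hA1, hA2, hNe, hD1, hD2⟩ := key G ha hb hi1 (show i + 2 ≤ j + 1 from by omega)
      (show j + 1 + 1 < a.length from by omega) hb2
    left
    exact ⟨a.eraseIdx (j + 1), hA2, by rw [hgdef]; exact hNe.symm, ⟨j + 1, by omega, rfl⟩, hD2⟩
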